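/- If W, V : G × G → B_X are mutually orthogonal partial cotranslations, then the projector of the units space of W, namely P(g) = W(g, e), is an invariant projector for W + V, and moreover (W(g,h) + V(g,h)) ∘ W(g, e) = W(g, h) for all g, h ∈ G. -/
import Mathlib

/-- If `W, V` are mutually orthogonal partial cotranslations, then the units-space
projector `P(g) = W(g,e)` of `W` is an invariant projector for `W + V`, and the
partial cotranslation obtained from `W + V` and this projector is `W` itself. -/
theorem partial_cotranslation_units_projector_sum {𝕜 : Type*} [NontriviallyNormedField 𝕜]
    {G X : Type*} [Group G] [NormedAddCommGroup X] [NormedSpace 𝕜 X] [CompleteSpace X]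
    (W V : G → G → (X →L[𝕜] X))
    (hW : ∀ g h k : G, W g (k * h) = W (h * g) k ∘L W g h)
    (hV : ∀ g h k : G, V g (k * h) = V (h * g) k ∘L V g h)
    (horth : ∀ g h k : G, W (h * g) k ∘L V g h = 0 ∧ V (h * g) k ∘L W g h = 0) :
    (∀ g : G, W g 1 ∘L W g 1 = W g 1) ∧
    (∀ g h : G, W (h * g) 1 ∘L (W g h + V g h) = (W g h + V g h) ∘L W g 1) ∧
    (∀ g h : G, (W g h + V g h) ∘L W g 1 = W g h) := by
  have hWW : ∀ g h : G, W g h ∘L W g 1 = W g h := by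
    intro g h
    have := hW g 1 h
    simpa using this.symm
  have hVW : ∀ g h : G, V g h ∘L W g 1 = 0 := by
    intro g h
    have := (horth g 1 h).2
    simpa using this
  have hWVsum : ∀ g h : G, (W g h + V g h) ∘L W g 1 = W g h := by
    intro g h
    rw [ContinuousLinearMap.add_comp, hWW, hVW, add_zero]
  refine ⟨fun g => ?_, fun g h => ?_, hWVsum⟩
  · have := hW g 1 1
    simpa using this.symm
  · have h1 : W (h * g) 1 ∘L W g h = W g h := by
      have := hW g h 1
      simpa using this.symm
    have h2 : W (h * g) 1 ∘L V g h = 0 := (horth g h 1).1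
    rw [ContinuousLinearMap.comp_add, h1, h2, add_zero, hWVsum]
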